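/- Let b = (b_ij) be a real 2×2 matrix with b12 ≤ 0, b21 ≤ 0 and Δ := (b22 − b11)² + 4·b12·b21 > 0, and set λ1 = (−b11 − b22 + √Δ)/2. Then there exists a constant θ > 0 such that for all t ≥ 0 and all x = (x1,x2), y = (y1,y2) ∈ ℝ₊², the row sums π'₁(0,t), π'₂(0,t) of exp(−t·b) satisfy |x1 − y1|·π'₁(0,t) + |x2 − y2|·π'₂(0,t) ≤ (1 + θ)·(|x1 − y1| + |x2 − y2|)·e^{λ1 t}. -/

import Mathlib

open Matrix Real

/-- `rowSum0 b t i` is the `i`-th row sum of the matrix exponential `exp(−t·b)`. -/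
noncomputable def rowSum0 (b : Matrix (Fin 2) (Fin 2) ℝ) (t : ℝ) (i : Fin 2) : ℝ :=
  (NormedSpace.exp ((-t) • b) *ᵥ ![1, 1]) i

/-- If `A *ᵥ u = μ • u`, then `exp A *ᵥ u = e^μ • u`. -/
lemma exp_mulVec_eigen (A : Matrix (Fin 2) (Fin 2) ℝ) (u : Fin 2 → ℝ) (μ : ℝ)
    (h : A *ᵥ u = μ • u) :
    NormedSpace.exp A *ᵥ u = Real.exp μ • u := by
  letI : SeminormedRing (Matrix (Fin 2) (Fin 2) ℝ) := Matrix.linftyOpSemiNormedRing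
  letI : NormedRing (Matrix (Fin 2) (Fin 2) ℝ) := Matrix.linftyOpNormedRing
  letI : NormedAlgebra ℝ (Matrix (Fin 2) (Fin 2) ℝ) := Matrix.linftyOpNormedAlgebra
  have hpow : ∀ n : ℕ, A ^ n *ᵥ u = μ ^ n • u := by
    intro n
    induction n with
    | zero => simp
    | succ n ih =>
      rw [pow_succ', ← Matrix.mulVec_mulVec, ih, Matrix.mulVec_smul, h, smul_smul, ← pow_succ]
  let f : Matrix (Fin 2) (Fin 2) ℝ →ₗ[ℝ] (Fin 2 → ℝ) :=
    { toFun := fun M => M *ᵥ u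
      map_add' := fun M N => Matrix.add_mulVec M N u
      map_smul' := fun c M => Matrix.smul_mulVec c M u }
  let F : Matrix (Fin 2) (Fin 2) ℝ →L[ℝ] (Fin 2 → ℝ) :=
    ⟨f, f.continuous_of_finiteDimensional⟩
  have h1 : NormedSpace.exp A *ᵥ u = F (NormedSpace.exp A) := rfl
  rw [h1, NormedSpace.exp_eq_tsum ℝ,
    F.map_tsum (NormedSpace.expSeries_summable' (𝕂 := ℝ) A)]
  have h2 : ∀ n : ℕ, F ((Nat.factorial n : ℝ)⁻¹ • A ^ n)
      = ((Nat.factorial n : ℝ)⁻¹ * μ ^ n) • u := by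
    intro n
    show ((Nat.factorial n : ℝ)⁻¹ • A ^ n) *ᵥ u = _
    rw [Matrix.smul_mulVec, hpow, smul_smul]
  simp_rw [h2]
  have hs : Summable fun n : ℕ => (Nat.factorial n : ℝ)⁻¹ * μ ^ n := by
    simpa [smul_eq_mul] using NormedSpace.expSeries_summable' (𝕂 := ℝ) (𝔸 := ℝ) μ
  rw [hs.tsum_smul_const]
  congr 1
  rw [Real.exp_eq_exp_ℝ, NormedSpace.exp_eq_tsum ℝ]
  simp [smul_eq_mul]

set_option maxHeartbeats 1000000 in
/-- If `b12 ≤ 0`, `b21 ≤ 0` and `Δ = (b22 − b11)² + 4 b12 b21 > 0`, then there is a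
constant `θ > 0` such that for all `t ≥ 0` and all `x, y` in the closed first quadrant,
`|x1 − y1| π'₁(0,t) + |x2 − y2| π'₂(0,t) ≤ (1 + θ)(|x1 − y1| + |x2 − y2|) e^{λ1 t}`,
where `λ1 = (−b11 − b22 + √Δ)/2`. -/
theorem stmt7 (b : Matrix (Fin 2) (Fin 2) ℝ)
    (hb12 : b 0 1 ≤ 0) (hb21 : b 1 0 ≤ 0)
    (Δ : ℝ) (hΔdef : Δ = (b 1 1 - b 0 0) ^ 2 + 4 * b 0 1 * b 1 0) (hΔ : 0 < Δ)
    (lam1 : ℝ) (hlam1 : lam1 = (-(b 0 0) - b 1 1 + Real.sqrt Δ) / 2) :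
    ∃ θ : ℝ, 0 < θ ∧
      ∀ t : ℝ, 0 ≤ t → ∀ x y : ℝ × ℝ,
        0 ≤ x.1 → 0 ≤ x.2 → 0 ≤ y.1 → 0 ≤ y.2 →
        |x.1 - y.1| * rowSum0 b t 0 + |x.2 - y.2| * rowSum0 b t 1
          ≤ (1 + θ) * (|x.1 - y.1| + |x.2 - y.2|) * Real.exp (lam1 * t) := by
  set c : ℝ := Real.sqrt Δ with hcdef
  have hcpos : 0 < c := Real.sqrt_pos.mpr hΔ
  have hc : c ^ 2 = (b 1 1 - b 0 0) ^ 2 + 4 * b 0 1 * b 1 0 := by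
    rw [hcdef, Real.sq_sqrt hΔ.le, hΔdef]
  set lam2 : ℝ := (-(b 0 0) - b 1 1 - c) / 2 with hlam2
  set A : Matrix (Fin 2) (Fin 2) ℝ := -b with hA
  set u : Fin 2 → ℝ := ![-(b 0 0) - b 0 1 - lam2, -(b 1 0) - b 1 1 - lam2] with hu
  set w : Fin 2 → ℝ := ![lam1 + b 0 0 + b 0 1, lam1 + b 1 0 + b 1 1] with hw
  have hAu : A *ᵥ u = lam1 • u := by
    funext i
    fin_cases i <;>
      simp [hA, hu, Matrix.mulVec, dotProduct, Fin.sum_univ_two, hlam1, hlam2] <;>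
      linear_combination -hc / 4
  have hAw : A *ᵥ w = lam2 • w := by
    funext i
    fin_cases i <;>
      simp [hA, hw, Matrix.mulVec, dotProduct, Fin.sum_univ_two, hlam1, hlam2] <;>
      linear_combination hc / 4
  have hlam21 : lam2 ≤ lam1 := by rw [hlam1, hlam2]; linarith
  have hinv : 0 ≤ c⁻¹ := inv_nonneg.mpr hcpos.le
  have hvdecomp : (![1, 1] : Fin 2 → ℝ) = c⁻¹ • (u + w) := by
    funext i
    fin_cases i <;>
      simp [hu, hw, hlam1, hlam2, Pi.add_apply, Pi.smul_apply, smul_eq_mul] <;>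
      field_simp <;> ring
  have hrs : ∀ t : ℝ, ∀ i : Fin 2,
      rowSum0 b t i = c⁻¹ * (Real.exp (t * lam1) * u i + Real.exp (t * lam2) * w i) := by
    intro t i
    have hsm : (-t) • b = t • A := by rw [hA, smul_neg, ← neg_smul]
    have h1 : NormedSpace.exp (t • A) *ᵥ u = Real.exp (t * lam1) • u :=
      exp_mulVec_eigen _ _ _ (by rw [Matrix.smul_mulVec, hAu, smul_smul])
    have h2 : NormedSpace.exp (t • A) *ᵥ w = Real.exp (t * lam2) • w :=
      exp_mulVec_eigen _ _ _ (by rw [Matrix.smul_mulVec, hAw, smul_smul])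
    show (NormedSpace.exp ((-t) • b) *ᵥ ![1, 1]) i = _
    rw [hsm, hvdecomp, Matrix.mulVec_smul, Matrix.mulVec_add, h1, h2]
    simp [Pi.smul_apply, Pi.add_apply, smul_eq_mul]
  set K : ℝ := c⁻¹ * (|u 0| + |w 0| + |u 1| + |w 1|) with hK
  have hK0 : 0 ≤ K := mul_nonneg hinv (by positivity)
  refine ⟨K + 1, by linarith, ?_⟩
  intro t ht x y hx1 hx2 hy1 hy2
  have hE1 : 0 < Real.exp (t * lam1) := Real.exp_pos _
  have hE : Real.exp (t * lam2) ≤ Real.exp (t * lam1) :=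
    Real.exp_le_exp.mpr (mul_le_mul_of_nonneg_left hlam21 ht)
  have hbound : ∀ i : Fin 2, rowSum0 b t i ≤ (1 + (K + 1)) * Real.exp (lam1 * t) := by
    intro i
    have hKi : c⁻¹ * (|u i| + |w i|) ≤ K := by
      have habs : |u i| + |w i| ≤ |u 0| + |w 0| + |u 1| + |w 1| := by
        fin_cases i <;>
          simp only [Fin.zero_eta, Fin.mk_one, Fin.isValue] <;>
          nlinarith [abs_nonneg (u 0), abs_nonneg (w 0), abs_nonneg (u 1), abs_nonneg (w 1)]
      calc c⁻¹ * (|u i| + |w i|) ≤ c⁻¹ * (|u 0| + |w 0| + |u 1| + |w 1|) :=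
            mul_le_mul_of_nonneg_left habs hinv
        _ = K := hK.symm
    rw [hrs t i, mul_comm lam1 t]
    calc c⁻¹ * (Real.exp (t * lam1) * u i + Real.exp (t * lam2) * w i)
        ≤ c⁻¹ * (Real.exp (t * lam1) * |u i| + Real.exp (t * lam1) * |w i|) := by
          apply mul_le_mul_of_nonneg_left _ hinv
          have t1 : Real.exp (t * lam1) * u i ≤ Real.exp (t * lam1) * |u i| :=
            mul_le_mul_of_nonneg_left (le_abs_self _) hE1.le
          have t2 : Real.exp (t * lam2) * w i ≤ Real.exp (t * lam1) * |w i| := by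
            calc Real.exp (t * lam2) * w i ≤ Real.exp (t * lam2) * |w i| :=
                  mul_le_mul_of_nonneg_left (le_abs_self _) (Real.exp_pos _).le
              _ ≤ Real.exp (t * lam1) * |w i| :=
                  mul_le_mul_of_nonneg_right hE (abs_nonneg _)
          exact add_le_add t1 t2
      _ = (c⁻¹ * (|u i| + |w i|)) * Real.exp (t * lam1) := by ring
      _ ≤ (1 + (K + 1)) * Real.exp (t * lam1) :=
            mul_le_mul_of_nonneg_right (hKi.trans (by linarith)) hE1.le
  have h0 := hbound 0
  have h1 := hbound 1
  have ha0 : (0:ℝ) ≤ |x.1 - y.1| := abs_nonneg _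
  have ha1 : (0:ℝ) ≤ |x.2 - y.2| := abs_nonneg _
  have H0 := mul_le_mul_of_nonneg_left h0 ha0
  have H1 := mul_le_mul_of_nonneg_left h1 ha1
  have hring : (1 + (K + 1)) * (|x.1 - y.1| + |x.2 - y.2|) * Real.exp (lam1 * t)
      = |x.1 - y.1| * ((1 + (K + 1)) * Real.exp (lam1 * t))
        + |x.2 - y.2| * ((1 + (K + 1)) * Real.exp (lam1 * t)) := by ring
  rw [hring]
  exact add_le_add H0 H1
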